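/- If w is an element of the q-th term of the lower central series of the free group on a_1,...,a_m, then the Magnus expansion M(w) equals 1 plus terms of degree ≥ q. -/

import Mathlib

/-- Coefficient function (indexed by words in the variables `X_1, …, X_m`) of the
Magnus expansion of a single free-group letter: the letter `a_j` is sent to `1 + X_j`,
and the inverse letter `a_j⁻¹` is sent to `∑_{k ≥ 0} (-1)^k X_j^k`. -/
def magnusLetter {m : ℕ} (x : Fin m × Bool) : List (Fin m) → ℤ :=
  fun w =>
    if x.2 then (if w = [] ∨ w = [x.1] then 1 else 0)
    else (if w.all (· = x.1) then (-1) ^ w.length else 0)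

/-- Convolution product of coefficient functions: this is the multiplication of
formal power series in non-commuting variables, expressed on coefficients. -/
def magnusConv {m : ℕ} (f g : List (Fin m) → ℤ) : List (Fin m) → ℤ :=
  fun w => ∑ i ∈ Finset.range (w.length + 1), f (w.take i) * g (w.drop i)

/-- The coefficient function of the constant power series `1`. -/
def magnusOne {m : ℕ} : List (Fin m) → ℤ := fun w => if w = [] then 1 else 0

/-- The Magnus expansion: the homomorphism from the free group on `a_1, …, a_m` to the
ring of formal power series in non-commuting variables `X_1, …, X_m`, determined by
`a_j ↦ 1 + X_j`, described via its family of coefficients.  `magnus g w` is the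
coefficient of the word `w = X_{i_1} ⋯ X_{i_k}` in the expansion of `g`. -/
def magnus {m : ℕ} (g : FreeGroup (Fin m)) : List (Fin m) → ℤ :=
  (g.toWord.map magnusLetter).foldr magnusConv magnusOne

namespace MagnusAux
variable {m : ℕ}

theorem take_ne_nil {w : List (Fin m)} {i : ℕ} (h : i < w.length) :
    w.take (i + 1) ≠ [] := by
  intro hc
  apply_fun List.length at hc
  simp only [List.length_take, List.length_nil] at hc
  omega

theorem drop_ne_nil {w : List (Fin m)} {i : ℕ} (h : i < w.length) :
    w.drop i ≠ [] := by
  intro hc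
  apply_fun List.length at hc
  simp only [List.length_drop, List.length_nil] at hc
  omega

theorem one_conv (f : List (Fin m) → ℤ) : magnusConv magnusOne f = f := by
  funext w
  rw [magnusConv, Finset.sum_range_succ']
  have h1 : ∀ i ∈ Finset.range w.length,
      magnusOne (w.take (i + 1)) * f (w.drop (i + 1)) = 0 := by
    intro i hi
    simp only [Finset.mem_range] at hi
    simp [magnusOne, take_ne_nil hi]
  rw [Finset.sum_eq_zero h1]
  simp [magnusOne]

theorem conv_one (f : List (Fin m) → ℤ) : magnusConv f magnusOne = f := by
  funext w
  rw [magnusConv, Finset.sum_range_succ]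
  have h1 : ∀ i ∈ Finset.range w.length,
      f (w.take i) * magnusOne (w.drop i) = 0 := by
    intro i hi
    simp only [Finset.mem_range] at hi
    simp [magnusOne, drop_ne_nil hi]
  rw [Finset.sum_eq_zero h1]
  simp [magnusOne]

theorem conv_assoc (f g h : List (Fin m) → ℤ) :
    magnusConv (magnusConv f g) h = magnusConv f (magnusConv g h) := by
  funext w
  simp only [magnusConv, Finset.sum_mul, Finset.mul_sum]
  rw [Finset.sum_sigma', Finset.sum_sigma']
  refine Finset.sum_bij' (fun p _ => ⟨p.2, p.1 - p.2⟩) (fun p _ => ⟨p.1 + p.2, p.1⟩)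
    ?_ ?_ ?_ ?_ ?_
  · rintro ⟨i, j⟩ hij
    simp only [Finset.mem_sigma, Finset.mem_range, List.length_take, List.length_drop]
      at hij ⊢
    omega
  · rintro ⟨j, k⟩ hjk
    simp only [Finset.mem_sigma, Finset.mem_range, List.length_take, List.length_drop]
      at hjk ⊢
    omega
  · rintro ⟨i, j⟩ hij
    simp only [Finset.mem_sigma, Finset.mem_range, List.length_take, List.length_drop]
      at hij
    simp only [Sigma.mk.inj_iff, heq_eq_eq, and_true, true_and]
    omega
  · rintro ⟨j, k⟩ hjk
    simp only [Finset.mem_sigma, Finset.mem_range, List.length_take, List.length_drop]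
      at hjk
    simp only [Sigma.mk.inj_iff, heq_eq_eq, and_true, true_and]
    omega
  · rintro ⟨i, j⟩ hij
    simp only [Finset.mem_sigma, Finset.mem_range, List.length_take, List.length_drop]
      at hij
    simp only
    have hji : j ≤ i := by omega
    rw [List.take_take, min_eq_left hji, List.drop_take, List.drop_drop,
      Nat.add_sub_cancel' hji, mul_assoc]

end MagnusAux

namespace MagnusAux
variable {m : ℕ}

theorem conv_add_left (f g h : List (Fin m) → ℤ) :
    magnusConv (f + g) h = magnusConv f h + magnusConv g h := by
  funext w
  simp [magnusConv, add_mul, Finset.sum_add_distrib]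

theorem conv_add_right (f g h : List (Fin m) → ℤ) :
    magnusConv f (g + h) = magnusConv f g + magnusConv f h := by
  funext w
  simp [magnusConv, mul_add, Finset.sum_add_distrib]

theorem zero_conv (f : List (Fin m) → ℤ) : magnusConv 0 f = 0 := by
  funext w; simp [magnusConv]

theorem conv_zero (f : List (Fin m) → ℤ) : magnusConv f 0 = 0 := by
  funext w; simp [magnusConv]

end MagnusAux

/-- Type synonym for coefficient functions, carrying the convolution ring structure. -/
def MagnusRing (m : ℕ) : Type := List (Fin m) → ℤ

namespace MagnusRing
variable {m : ℕ}

instance : AddCommGroup (MagnusRing m) := Pi.addCommGroup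

instance : Ring (MagnusRing m) where
  __ := (inferInstance : AddCommGroup (MagnusRing m))
  mul := magnusConv
  one := magnusOne
  mul_assoc := MagnusAux.conv_assoc
  one_mul := MagnusAux.one_conv
  mul_one := MagnusAux.conv_one
  left_distrib := MagnusAux.conv_add_right
  right_distrib := fun f g h => MagnusAux.conv_add_left f g h
  zero_mul := MagnusAux.zero_conv
  mul_zero := MagnusAux.conv_zero

theorem mul_def (f g : MagnusRing m) : f * g = magnusConv f g := rfl
theorem one_def : (1 : MagnusRing m) = magnusOne := rfl
theorem sub_apply (f g : MagnusRing m) (w : List (Fin m)) :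
    (f - g) w = f w - g w := rfl
theorem one_apply (w : List (Fin m)) : (1 : MagnusRing m) w = if w = [] then 1 else 0 := rfl

end MagnusRing

namespace MagnusAux
variable {m : ℕ}

/-- `1 + X_j` as a coefficient function. -/
def uval (j : Fin m) : List (Fin m) → ℤ := magnusLetter (j, true)

/-- `∑ (-1)^k X_j^k` as a coefficient function. -/
def uinv (j : Fin m) : List (Fin m) → ℤ := magnusLetter (j, false)

theorem uval_apply (j : Fin m) (w : List (Fin m)) :
    uval j w = if w = [] ∨ w = [j] then 1 else 0 := rfl

theorem uinv_apply (j : Fin m) (w : List (Fin m)) :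
    uinv j w = if w.all (· = j) then (-1) ^ w.length else 0 := rfl

theorem uval_long {j : Fin m} {w : List (Fin m)} (h : 2 ≤ w.length) : uval j w = 0 := by
  rw [uval_apply, if_neg]
  rintro (rfl | rfl) <;> simp at h

theorem val_inv (j : Fin m) : magnusConv (uval j) (uinv j) = magnusOne := by
  funext w
  match w with
  | [] => simp [magnusConv, magnusOne, uval_apply, uinv_apply]
  | a :: t =>
    rw [magnusConv]
    have hlen : (a :: t).length = t.length + 1 := rfl
    rw [hlen, Finset.sum_range_succ', Finset.sum_range_succ']
    have hz : ∀ i ∈ Finset.range t.length,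
        uval j ((a :: t).take (i + 1 + 1)) * uinv j ((a :: t).drop (i + 1 + 1)) = 0 := by
      intro i hi
      simp only [Finset.mem_range] at hi
      rw [uval_long (by simp [List.length_take]; omega), zero_mul]
    rw [Finset.sum_eq_zero hz, zero_add]
    simp only [List.take_zero, List.drop_zero, List.take_succ_cons, List.take_zero,
      List.drop_succ_cons, List.drop_zero]
    rw [uval_apply, uval_apply, uinv_apply, uinv_apply]
    by_cases haj : a = j
    · subst haj
      simp only [magnusOne, pow_succ, List.all_cons]
      simp
      split_ifs <;> ring
    · simp [magnusOne, haj, List.all_cons]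

theorem inv_val (j : Fin m) : magnusConv (uinv j) (uval j) = magnusOne := by
  funext w
  rcases List.eq_nil_or_concat w with rfl | ⟨t, c, rfl⟩
  · simp [magnusConv, magnusOne, uval_apply, uinv_apply]
  · rw [List.concat_eq_append, magnusConv]
    have hlen : (t ++ [c]).length = t.length + 1 := by simp
    rw [hlen, Finset.sum_range_succ, Finset.sum_range_succ]
    have hz : ∀ i ∈ Finset.range t.length,
        uinv j ((t ++ [c]).take i) * uval j ((t ++ [c]).drop i) = 0 := by
      intro i hi
      simp only [Finset.mem_range] at hi
      rw [uval_long (by simp [List.length_drop]; omega), mul_zero]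
    rw [Finset.sum_eq_zero hz, zero_add]
    have h1 : (t ++ [c]).take t.length = t := by simp
    have h2 : (t ++ [c]).drop t.length = [c] := by simp
    have h3 : (t ++ [c]).take (t.length + 1) = t ++ [c] := by
      apply List.take_of_length_le; simp
    have h4 : (t ++ [c]).drop (t.length + 1) = [] := by
      apply List.drop_of_length_le; simp
    rw [h1, h2, h3, h4]
    rw [uval_apply, uval_apply, uinv_apply, uinv_apply]
    by_cases hcj : c = j
    · subst hcj
      simp only [magnusOne, pow_succ, List.all_append]
      simp
      split_ifs <;> ring
    · simp [magnusOne, hcj, List.all_append]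

end MagnusAux

namespace MagnusAux
variable {m : ℕ}

/-- The unit `1 + X_j` of the Magnus ring. -/
def u (j : Fin m) : (MagnusRing m)ˣ :=
  ⟨uval j, uinv j, val_inv j, inv_val j⟩

/-- The Magnus expansion as a group homomorphism into the units of the Magnus ring. -/
def phi : FreeGroup (Fin m) →* (MagnusRing m)ˣ := FreeGroup.lift u

theorem conv_nil (f g : List (Fin m) → ℤ) : magnusConv f g [] = f [] * g [] := by
  simp [magnusConv]

theorem foldr_eq (L : List (Fin m × Bool)) :
    (L.map magnusLetter).foldr magnusConv magnusOne
      = (((L.map fun x => cond x.2 (u x.1) (u x.1)⁻¹).prod : (MagnusRing m)ˣ) :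
          MagnusRing m) := by
  induction L with
  | nil => rfl
  | cons x L ih =>
    rw [List.map_cons, List.foldr_cons, List.map_cons, List.prod_cons, Units.val_mul, ih,
      MagnusRing.mul_def]
    obtain ⟨j, b⟩ := x
    cases b <;> rfl

theorem magnus_eq (g : FreeGroup (Fin m)) :
    magnus g = ((phi g : (MagnusRing m)ˣ) : MagnusRing m) := by
  have h : phi g
      = ((g.toWord.map fun x => cond x.2 (u x.1) (u x.1)⁻¹).prod : (MagnusRing m)ˣ) := by
    conv_lhs => rw [phi, ← FreeGroup.mk_toWord (x := g)]
    exact FreeGroup.lift_mk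
  show (g.toWord.map magnusLetter).foldr magnusConv magnusOne = _
  rw [foldr_eq, h]

/-- `magnus` as a map into the Magnus ring. -/
def mag (g : FreeGroup (Fin m)) : MagnusRing m := magnus g

theorem mag_apply (g : FreeGroup (Fin m)) (w : List (Fin m)) : mag g w = magnus g w := rfl

theorem mag_eq (g : FreeGroup (Fin m)) :
    mag g = ((phi g : (MagnusRing m)ˣ) : MagnusRing m) := magnus_eq g

theorem mag_mul (g h : FreeGroup (Fin m)) : mag (g * h) = mag g * mag h := by
  rw [mag_eq, mag_eq, mag_eq, map_mul, Units.val_mul]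

theorem mag_one : mag (1 : FreeGroup (Fin m)) = 1 := by
  rw [mag_eq, map_one, Units.val_one]

theorem mag_mul_inv (g : FreeGroup (Fin m)) : mag g * mag g⁻¹ = 1 := by
  rw [← mag_mul, mul_inv_cancel, mag_one]

/-- `Jdeg p f` says that `f` has only terms of degree `≥ p`. -/
def Jdeg (p : ℕ) (f : MagnusRing m) : Prop :=
  ∀ w : List (Fin m), w.length < p → f w = 0

theorem Jdeg.mono {p r : ℕ} {f : MagnusRing m} (h : Jdeg p f) (hrp : r ≤ p) : Jdeg r f :=
  fun w hw => h w (lt_of_lt_of_le hw hrp)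

theorem Jdeg.add {p : ℕ} {f g : MagnusRing m} (hf : Jdeg p f) (hg : Jdeg p g) :
    Jdeg p (f + g) := fun w hw => by
  show f w + g w = 0
  rw [hf w hw, hg w hw, add_zero]

theorem Jdeg.neg {p : ℕ} {f : MagnusRing m} (hf : Jdeg p f) : Jdeg p (-f) := fun w hw => by
  show -(f w) = 0
  rw [hf w hw, neg_zero]

theorem Jdeg.sub {p : ℕ} {f g : MagnusRing m} (hf : Jdeg p f) (hg : Jdeg p g) :
    Jdeg p (f - g) := by
  rw [sub_eq_add_neg]; exact hf.add hg.neg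

theorem Jdeg.mul {p r : ℕ} {f g : MagnusRing m} (hf : Jdeg p f) (hg : Jdeg r g) :
    Jdeg (p + r) (f * g) := by
  intro w hw
  show magnusConv f g w = 0
  unfold magnusConv
  apply Finset.sum_eq_zero
  intro i hi
  simp only [Finset.mem_range] at hi
  rcases lt_or_ge i p with h | h
  · rw [hf _ (by rw [List.length_take]; omega), zero_mul]
  · rw [hg _ (by rw [List.length_drop]; omega), mul_zero]

theorem Jdeg.mul_right {p : ℕ} {f : MagnusRing m} (hf : Jdeg p f) (g : MagnusRing m) :
    Jdeg p (f * g) := by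
  intro w hw
  show magnusConv f g w = 0
  unfold magnusConv
  apply Finset.sum_eq_zero
  intro i hi
  rw [hf _ (by rw [List.length_take]; omega), zero_mul]

theorem magnusLetter_nil (x : Fin m × Bool) : magnusLetter x [] = 1 := by
  obtain ⟨j, b⟩ := x
  cases b <;> simp [magnusLetter]

theorem magnus_nil (g : FreeGroup (Fin m)) : magnus g [] = 1 := by
  show (g.toWord.map magnusLetter).foldr magnusConv magnusOne [] = 1
  induction g.toWord with
  | nil => rfl
  | cons x L ih =>
    rw [List.map_cons, List.foldr_cons, conv_nil, ih, magnusLetter_nil, one_mul]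

theorem base_J1 (g : FreeGroup (Fin m)) : Jdeg 1 (mag g - 1) := by
  intro w hw
  have hnil : w = [] := List.length_eq_zero_iff.mp (by omega)
  subst hnil
  rw [MagnusRing.sub_apply, MagnusRing.one_apply, mag_apply, magnus_nil]
  simp

theorem inv_J {p : ℕ} {g : FreeGroup (Fin m)} (h : Jdeg p (mag g - 1)) :
    Jdeg p (mag g⁻¹ - 1) := by
  set A := mag g
  set A' := mag g⁻¹
  have hAA' : A * A' = 1 := mag_mul_inv g
  have h2 : A' - 1 = -(A - 1) - (A - 1) * (A' - 1) := by
    have e : (A - 1) * (A' - 1) = A * A' - A - A' + 1 := by noncomm_ring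
    rw [e, hAA']
    abel
  rw [h2]
  exact (h.neg).sub (h.mul_right _)

/-- The subgroup of elements whose Magnus expansion is `1` mod degree-`p` terms. -/
def Kgrp (m p : ℕ) : Subgroup (FreeGroup (Fin m)) where
  carrier := {g | Jdeg p (mag g - 1)}
  one_mem' := by
    show Jdeg p (mag 1 - 1)
    rw [mag_one, sub_self]
    intro w _; rfl
  mul_mem' := by
    intro a b ha hb
    show Jdeg p (mag (a * b) - 1)
    have h : mag (a * b) - 1 = (mag a - 1) + (mag b - 1) + (mag a - 1) * (mag b - 1) := by
      rw [mag_mul]; noncomm_ring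
    rw [h]
    exact (ha.add hb).add ((ha.mul hb).mono (by omega))
  inv_mem' := by
    intro a ha
    exact inv_J ha

theorem mem_Kgrp {p : ℕ} {g : FreeGroup (Fin m)} :
    g ∈ Kgrp m p ↔ Jdeg p (mag g - 1) := Iff.rfl

theorem key (q : ℕ) :
    ∀ g ∈ (⊤ : Subgroup (FreeGroup (Fin m))).lowerCentralSeries q, Jdeg (q + 1) (mag g - 1) := by
  induction q with
  | zero => exact fun g _ => base_J1 g
  | succ q ih =>
    intro g hg
    have hle : (⊤ : Subgroup (FreeGroup (Fin m))).lowerCentralSeries (q + 1) ≤ Kgrp m (q + 2) := by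
      rw [Subgroup.lowerCentralSeries_succ]
      refine (Subgroup.closure_le _).mpr ?_
      rintro x ⟨p, hp, z, -, rfl⟩
      show Jdeg (q + 2) (mag (p * z * p⁻¹ * z⁻¹) - 1)
      set A := mag p
      set B := mag z
      set A' := mag p⁻¹
      set B' := mag z⁻¹
      have hAA' : A * A' = 1 := mag_mul_inv p
      have hBB' : B * B' = 1 := mag_mul_inv z
      have hmag : mag (p * z * p⁻¹ * z⁻¹) = A * B * A' * B' := by
        rw [mag_mul, mag_mul, mag_mul]
      have hkey : A * B * A' * B' - 1 = (A * B - B * A) * (A' * B') := by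
        rw [sub_mul]
        have e1 : A * B * (A' * B') = A * B * A' * B' := by noncomm_ring
        have e2 : B * A * (A' * B') = B * (A * A') * B' := by noncomm_ring
        rw [e1, e2, hAA', mul_one, hBB']
      have hdiff : A * B - B * A = (A - 1) * (B - 1) - (B - 1) * (A - 1) := by noncomm_ring
      have ha : Jdeg (q + 1) (A - 1) := ih p hp
      have hb : Jdeg 1 (B - 1) := base_J1 z
      have hcomm : Jdeg (q + 2) (A * B - B * A) := by
        rw [hdiff]
        exact ((ha.mul hb).mono (by omega)).sub ((hb.mul ha).mono (by omega))
      rw [hmag, hkey]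
      exact hcomm.mul_right _
    exact hle hg
end MagnusAux


/-- if `w` lies in the `q`-th term of the lower central series of the free
group (with the convention `Γ_1 = F`, `Γ_{q+1} = [F, Γ_q]`, so that `Γ_{q+1}` is
`lowerCentralSeries F q` in Mathlib's indexing), then its Magnus expansion equals `1`
plus terms of degree `≥ q + 1`: the constant coefficient is `1` and every coefficient
of a nonempty word of length `≤ q` vanishes. -/
theorem magnus_lowerCentralSeries {m : ℕ} (q : ℕ) (g : FreeGroup (Fin m))
    (hg : g ∈ (⊤ : Subgroup (FreeGroup (Fin m))).lowerCentralSeries q) :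
    magnus g [] = 1 ∧
      ∀ w : List (Fin m), 1 ≤ w.length → w.length ≤ q → magnus g w = 0 := by
  have h := MagnusAux.key q g hg
  constructor
  · exact MagnusAux.magnus_nil g
  · intro w h1 h2
    have hw := h w (by omega)
    rw [MagnusRing.sub_apply, MagnusRing.one_apply] at hw
    have hne : w ≠ [] := by
      intro hnil; subst hnil; simp at h1
    rw [if_neg hne] at hw
    rw [← MagnusAux.mag_apply]
    omega
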